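/- Let G be formed from graphs G1 and G2 (each with vertices s,t) by parallel composition, and let x = (x¹,x²) be inputs selecting subgraphs. If s,t are disconnected in G(x), then the minimum cut size satisfies C_{s,t}(G(x)) = C_{s,t}(G1(x¹)) + C_{s,t}(G2(x²)). If instead G is formed by series composition, then C_{s,t}(G(x)) = min{C_{s,t}(G1(x¹)), C_{s,t}(G2(x²))}. -/

import Mathlib

open scoped ENNReal

namespace STConn

variable {V E : Type*}

/-- `v` is an endpoint of edge `e`. -/
def Touches (ends : E → V × V) (e : E) (v : V) : Prop :=
  (ends e).1 = v ∨ (ends e).2 = v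

/-- Net flow out of vertex `v` for an edge-valued function `θ` (value along the
fixed orientation of each edge). -/
noncomputable def netflow [Fintype E] [DecidableEq V] (ends : E → V × V) (θ : E → ℝ) (v : V) : ℝ :=
  ∑ e, θ e * ((if (ends e).1 = v then (1:ℝ) else 0) - (if (ends e).2 = v then 1 else 0))

/-- `θ` is a unit `st`-flow: net flow `+1` at `s`, `-1` at `t`, `0` elsewhere. -/
def IsUnitFlow [Fintype E] [DecidableEq V] (ends : E → V × V) (s t : V) (θ : E → ℝ) : Prop :=
  ∀ v, netflow ends θ v = (if v = s then (1:ℝ) else 0) - (if v = t then 1 else 0)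

/-- Energy of a flow with respect to edge weights `c`. -/
noncomputable def energy [Fintype E] (c : E → ℝ) (θ : E → ℝ) : ℝ :=
  ∑ e, θ e ^ 2 / c e

/-- Effective resistance between `s` and `t`, restricted to flows supported on `S`
(taking value `∞` if no unit `st`-flow supported on `S` exists). -/
noncomputable def effResOn [Fintype E] [DecidableEq V] (ends : E → V × V) (c : E → ℝ)
    (S : Set E) (s t : V) : ℝ≥0∞ :=
  ⨅ θ : {θ : E → ℝ // IsUnitFlow ends s t θ ∧ ∀ e ∉ S, θ e = 0},
    ENNReal.ofReal (energy c θ.1)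

/-- Effective resistance between `s` and `t` in the network `(ends, c)`. -/
noncomputable def effRes [Fintype E] [DecidableEq V] (ends : E → V × V) (c : E → ℝ)
    (s t : V) : ℝ≥0∞ :=
  effResOn ends c Set.univ s t

end STConn
namespace STConn

variable {V E : Type*}

/-- A circulation: an edge-valued function with zero net flow at every vertex. -/
def IsCirculation [Fintype E] [DecidableEq V] (ends : E → V × V) (θ : E → ℝ) : Prop :=
  ∀ v, netflow ends θ v = 0

/-- `a` and `b` are joined by a walk using only edges in `S`. -/
def ConnectedIn (ends : E → V × V) (S : Set E) (a b : V) : Prop :=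
  Relation.ReflTransGen (fun u v => ∃ e ∈ S, ends e = (u, v) ∨ ends e = (v, u)) a b

end STConn
namespace STConn

variable {V E : Type*}

/-- The minimum `st`-cut size of the subgraph with present edge set `S`, counting
crossing edges of the ambient graph: the minimum over `κ : V → {0,1}` with
`κ(s) = 1`, `κ(t) = 0` and `κ` constant across every present edge, of the number
of ambient edges with endpoints on both sides; `∞` if no such cut exists
(i.e. if `s` and `t` are connected through `S`). -/
noncomputable def minCutOn [Fintype E] (ends : E → V × V) (S : Set E) (s t : V) : ℕ∞ :=
  ⨅ κ : {κ : V → Bool // κ s = true ∧ κ t = false ∧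
          ∀ e ∈ S, κ (ends e).1 = κ (ends e).2},
    ((Finset.univ.filter fun e : E => κ.1 (ends e).1 ≠ κ.1 (ends e).2).card : ℕ∞)

end STConn


namespace STConnAux

open STConn

lemma enat_eq_iInf {ι : Sort*} [Nonempty ι] (f : ι → ℕ∞) : ∃ i, f i = ⨅ j, f j := by
  obtain ⟨a, ⟨i, rfl⟩, ha⟩ := (wellFounded_lt (α := ℕ∞)).has_min (Set.range f)
    (Set.range_nonempty f)
  exact ⟨i, le_antisymm (le_iInf fun j => not_lt.1 (ha _ ⟨j, rfl⟩)) (iInf_le f i)⟩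

lemma card_filter_sum {E₁ E₂ : Type} [Fintype E₁] [Fintype E₂] (p : E₁ ⊕ E₂ → Prop)
    [DecidablePred p] :
    (Finset.univ.filter p).card = (Finset.univ.filter fun e => p (Sum.inl e)).card
      + (Finset.univ.filter fun e => p (Sum.inr e)).card := by
  rw [Finset.card_filter, Finset.card_filter, Finset.card_filter, Fintype.sum_sum_type]

lemma cut_of_not_connected {V E : Type} (ends : E → V × V) (S : Set E) {s t : V}
    (h : ¬ ConnectedIn ends S s t) :
    ∃ κ : V → Bool, κ s = true ∧ κ t = false ∧ ∀ e ∈ S, κ (ends e).1 = κ (ends e).2 := by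
  classical
  refine ⟨fun v => decide (ConnectedIn ends S s v), decide_eq_true Relation.ReflTransGen.refl,
    decide_eq_false h, fun e he => ?_⟩
  exact decide_eq_decide.mpr ⟨fun hc => hc.tail ⟨e, he, Or.inl Prod.mk.eta⟩,
    fun hc => hc.tail ⟨e, he, Or.inr Prod.mk.eta⟩⟩

lemma filter_card_congr {V E : Type} [Fintype E] (ends : E → V × V) (κ κ' : V → Bool)
    (h : ∀ e, κ (ends e).1 = κ' (ends e).1 ∧ κ (ends e).2 = κ' (ends e).2) :
    (Finset.univ.filter fun e => κ (ends e).1 ≠ κ (ends e).2).card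
      = (Finset.univ.filter fun e => κ' (ends e).1 ≠ κ' (ends e).2).card := by
  congr 1
  apply Finset.filter_congr
  intro e _
  rw [(h e).1, (h e).2]

lemma filter_card_zero {V E : Type} [Fintype E] (ends : E → V × V) (κ : V → Bool)
    (h : ∀ e, κ (ends e).1 = κ (ends e).2) :
    (Finset.univ.filter fun e => κ (ends e).1 ≠ κ (ends e).2).card = 0 := by
  rw [Finset.card_eq_zero, Finset.filter_eq_empty_iff]
  intro e _
  simpa using h e

end STConnAux

open STConn STConnAux in
/-- Behaviour of the minimum `st`-cut size under parallel and series
composition.  If `G` is the parallel gluing of `G₁` and `G₂` (sharing only the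
vertices `s` and `t`) and `s, t` are disconnected in the subgraph `G(x)`, then
`C_{s,t}(G(x)) = C_{s,t}(G₁(x¹)) + C_{s,t}(G₂(x²))`; if instead `G` is the
series gluing (sharing only the middle vertex `m`) then
`C_{s,t}(G(x)) = min {C_{s,m}(G₁(x¹)), C_{m,t}(G₂(x²))}`. -/
theorem stmt_14 :
    (∀ (V E₁ E₂ : Type) (_ : Fintype E₁) (_ : Fintype E₂)
      (s t : V) (_ : s ≠ t)
      (ends₁ : E₁ → V × V) (ends₂ : E₂ → V × V)
      (_ : ∀ e₁ e₂ v, Touches ends₁ e₁ v → Touches ends₂ e₂ v → v = s ∨ v = t)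
      (x₁ : E₁ → Bool) (x₂ : E₂ → Bool),
      ¬ ConnectedIn (Sum.elim ends₁ ends₂)
          {e | Sum.elim x₁ x₂ e = true} s t →
      minCutOn (Sum.elim ends₁ ends₂) {e | Sum.elim x₁ x₂ e = true} s t
        = minCutOn ends₁ {e | x₁ e = true} s t
          + minCutOn ends₂ {e | x₂ e = true} s t) ∧
    (∀ (V E₁ E₂ : Type) (_ : Fintype E₁) (_ : Fintype E₂)
      (s m t : V) (_ : s ≠ m) (_ : m ≠ t) (_ : s ≠ t)
      (ends₁ : E₁ → V × V) (ends₂ : E₂ → V × V)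
      (_ : ∀ e₁ e₂ v, Touches ends₁ e₁ v → Touches ends₂ e₂ v → v = m)
      (_ : ∀ e₁, ¬ Touches ends₁ e₁ t) (_ : ∀ e₂, ¬ Touches ends₂ e₂ s)
      (x₁ : E₁ → Bool) (x₂ : E₂ → Bool),
      minCutOn (Sum.elim ends₁ ends₂) {e | Sum.elim x₁ x₂ e = true} s t
        = min (minCutOn ends₁ {e | x₁ e = true} s m)
            (minCutOn ends₂ {e | x₂ e = true} m t)) := by
  constructor
  · -- parallel composition
    intro V E₁ E₂ _ _ s t hst ends₁ ends₂ hshare x₁ x₂ hdisc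
    classical
    have hd₁ : ¬ ConnectedIn ends₁ {e | x₁ e = true} s t := fun h =>
      hdisc (Relation.ReflTransGen.mono
        (fun u v => by rintro ⟨e, he, hor⟩; exact ⟨Sum.inl e, he, hor⟩) _ _ h)
    have hd₂ : ¬ ConnectedIn ends₂ {e | x₂ e = true} s t := fun h =>
      hdisc (Relation.ReflTransGen.mono
        (fun u v => by rintro ⟨e, he, hor⟩; exact ⟨Sum.inr e, he, hor⟩) _ _ h)
    haveI ne₁ : Nonempty {κ : V → Bool // κ s = true ∧ κ t = false ∧
        ∀ e ∈ {e : E₁ | x₁ e = true}, κ (ends₁ e).1 = κ (ends₁ e).2} := by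
      obtain ⟨κ, h1, h2, h3⟩ := cut_of_not_connected ends₁ _ hd₁
      exact ⟨⟨κ, h1, h2, h3⟩⟩
    haveI ne₂ : Nonempty {κ : V → Bool // κ s = true ∧ κ t = false ∧
        ∀ e ∈ {e : E₂ | x₂ e = true}, κ (ends₂ e).1 = κ (ends₂ e).2} := by
      obtain ⟨κ, h1, h2, h3⟩ := cut_of_not_connected ends₂ _ hd₂
      exact ⟨⟨κ, h1, h2, h3⟩⟩
    obtain ⟨κ₁, hκ₁⟩ := enat_eq_iInf (fun κ : {κ : V → Bool // κ s = true ∧ κ t = false ∧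
        ∀ e ∈ {e : E₁ | x₁ e = true}, κ (ends₁ e).1 = κ (ends₁ e).2} =>
      ((Finset.univ.filter fun e : E₁ => κ.1 (ends₁ e).1 ≠ κ.1 (ends₁ e).2).card : ℕ∞))
    obtain ⟨κ₂, hκ₂⟩ := enat_eq_iInf (fun κ : {κ : V → Bool // κ s = true ∧ κ t = false ∧
        ∀ e ∈ {e : E₂ | x₂ e = true}, κ (ends₂ e).1 = κ (ends₂ e).2} =>
      ((Finset.univ.filter fun e : E₂ => κ.1 (ends₂ e).1 ≠ κ.1 (ends₂ e).2).card : ℕ∞))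
    simp only [minCutOn]
    refine le_antisymm ?_ ?_
    · -- ≤ : glue the two optimal cuts
      set κc : V → Bool := fun v => if ∃ e : E₁, Touches ends₁ e v then κ₁.1 v else κ₂.1 v
        with hκcdef
      have agree₁ : ∀ v, (∃ e : E₁, Touches ends₁ e v) → κc v = κ₁.1 v := by
        intro v hv
        simp only [hκcdef]
        exact if_pos hv
      have agree₂ : ∀ v, (∃ e : E₂, Touches ends₂ e v) → κc v = κ₂.1 v := by
        intro v hv
        by_cases h1 : ∃ e : E₁, Touches ends₁ e v
        · obtain ⟨e₁, he₁⟩ := h1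
          obtain ⟨e₂, he₂⟩ := hv
          rcases hshare e₁ e₂ v he₁ he₂ with rfl | rfl
          · rw [agree₁ _ ⟨e₁, he₁⟩, κ₁.2.1, κ₂.2.1]
          · rw [agree₁ _ ⟨e₁, he₁⟩, κ₁.2.2.1, κ₂.2.2.1]
        · simp only [hκcdef]
          exact if_neg h1
      have hcs : κc s = true := by
        by_cases h : ∃ e : E₁, Touches ends₁ e s
        · rw [agree₁ _ h, κ₁.2.1]
        · simp only [hκcdef]
          rw [if_neg h, κ₂.2.1]
      have hct : κc t = false := by
        by_cases h : ∃ e : E₁, Touches ends₁ e t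
        · rw [agree₁ _ h, κ₁.2.2.1]
        · simp only [hκcdef]
          rw [if_neg h, κ₂.2.2.1]
      have hcut : ∀ e ∈ {e : E₁ ⊕ E₂ | Sum.elim x₁ x₂ e = true},
          κc ((Sum.elim ends₁ ends₂) e).1 = κc ((Sum.elim ends₁ ends₂) e).2 := by
        rintro (e | e) he
        · show κc (ends₁ e).1 = κc (ends₁ e).2
          rw [agree₁ _ ⟨e, Or.inl rfl⟩, agree₁ _ ⟨e, Or.inr rfl⟩]
          exact κ₁.2.2.2 e he
        · show κc (ends₂ e).1 = κc (ends₂ e).2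
          rw [agree₂ _ ⟨e, Or.inl rfl⟩, agree₂ _ ⟨e, Or.inr rfl⟩]
          exact κ₂.2.2.2 e he
      refine iInf_le_of_le ⟨κc, hcs, hct, hcut⟩ ?_
      rw [card_filter_sum, Nat.cast_add]
      simp only [Sum.elim_inl, Sum.elim_inr]
      erw [filter_card_congr ends₁ κc κ₁.1
            (fun e => ⟨agree₁ _ ⟨e, Or.inl rfl⟩, agree₁ _ ⟨e, Or.inr rfl⟩⟩),
          filter_card_congr ends₂ κc κ₂.1
            (fun e => ⟨agree₂ _ ⟨e, Or.inl rfl⟩, agree₂ _ ⟨e, Or.inr rfl⟩⟩)]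
      exact add_le_add (le_of_eq hκ₁) (le_of_eq hκ₂)
    · -- ≥ : any cut of the glued graph restricts to both sides
      refine le_iInf fun κ => ?_
      rw [card_filter_sum, Nat.cast_add]
      simp only [Sum.elim_inl, Sum.elim_inr]
      exact add_le_add
        (iInf_le _ (⟨κ.1, κ.2.1, κ.2.2.1, fun e he => κ.2.2.2 (Sum.inl e) he⟩ : {κ' : V → Bool // κ' s = true ∧ κ' t = false ∧ ∀ e ∈ {e : E₁ | x₁ e = true}, κ' (ends₁ e).1 = κ' (ends₁ e).2}))
        (iInf_le _ (⟨κ.1, κ.2.1, κ.2.2.1, fun e he => κ.2.2.2 (Sum.inr e) he⟩ : {κ' : V → Bool // κ' s = true ∧ κ' t = false ∧ ∀ e ∈ {e : E₂ | x₂ e = true}, κ' (ends₂ e).1 = κ' (ends₂ e).2}))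
  · -- series composition
    intro V E₁ E₂ _ _ s m t hsm hmt hst ends₁ ends₂ hshare h1t h2s x₁ x₂
    classical
    simp only [minCutOn]
    refine le_antisymm (le_min ?_ ?_) ?_
    · -- ≤ minCut (G₁, s, m)
      refine le_iInf fun κ₁ => ?_
      set κ : V → Bool := fun v => if (∃ e : E₂, Touches ends₂ e v) ∨ v = t then false
        else κ₁.1 v with hκdef
      have hagree : ∀ v, (∃ e : E₁, Touches ends₁ e v) → κ v = κ₁.1 v := by
        intro v hv
        obtain ⟨e, he⟩ := hv
        simp only [hκdef]
        by_cases h2 : ∃ e₂ : E₂, Touches ends₂ e₂ v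
        · obtain ⟨e₂, he₂⟩ := h2
          have hm := hshare e e₂ v he he₂
          rw [if_pos (Or.inl ⟨e₂, he₂⟩), hm, κ₁.2.2.1]
        · exact if_neg (not_or.mpr ⟨h2, fun (h : v = t) => h1t e (h ▸ he)⟩)
      have hfalse : ∀ v, (∃ e : E₂, Touches ends₂ e v) → κ v = false := by
        intro v hv
        simp only [hκdef]
        exact if_pos (Or.inl hv)
      have hs : κ s = true := by
        simp only [hκdef]
        rw [if_neg (not_or.mpr ⟨fun ⟨e, he⟩ => h2s e he, hst⟩), κ₁.2.1]
      have ht : κ t = false := by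
        simp only [hκdef]
        exact if_pos (Or.inr trivial)
      have hcut : ∀ e ∈ {e : E₁ ⊕ E₂ | Sum.elim x₁ x₂ e = true},
          κ ((Sum.elim ends₁ ends₂) e).1 = κ ((Sum.elim ends₁ ends₂) e).2 := by
        rintro (e | e) he
        · show κ (ends₁ e).1 = κ (ends₁ e).2
          rw [hagree _ ⟨e, Or.inl rfl⟩, hagree _ ⟨e, Or.inr rfl⟩]
          exact κ₁.2.2.2 e he
        · show κ (ends₂ e).1 = κ (ends₂ e).2
          rw [hfalse _ ⟨e, Or.inl rfl⟩, hfalse _ ⟨e, Or.inr rfl⟩]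
      refine iInf_le_of_le ⟨κ, hs, ht, hcut⟩ ?_
      rw [card_filter_sum]
      simp only [Sum.elim_inl, Sum.elim_inr]
      erw [filter_card_congr ends₁ κ κ₁.1
            (fun e => ⟨hagree _ ⟨e, Or.inl rfl⟩, hagree _ ⟨e, Or.inr rfl⟩⟩),
          filter_card_zero ends₂ κ
            (fun e => by rw [hfalse _ ⟨e, Or.inl rfl⟩, hfalse _ ⟨e, Or.inr rfl⟩]),
          Nat.add_zero]
    · -- ≤ minCut (G₂, m, t)
      refine le_iInf fun κ₂ => ?_
      set κ : V → Bool := fun v => if (∃ e : E₁, Touches ends₁ e v) ∨ v = s then true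
        else κ₂.1 v with hκdef
      have hagree : ∀ v, (∃ e : E₂, Touches ends₂ e v) → κ v = κ₂.1 v := by
        intro v hv
        obtain ⟨e, he⟩ := hv
        simp only [hκdef]
        by_cases h1 : ∃ e₁ : E₁, Touches ends₁ e₁ v
        · obtain ⟨e₁, he₁⟩ := h1
          have hm := hshare e₁ e v he₁ he
          rw [if_pos (Or.inl ⟨e₁, he₁⟩), hm, κ₂.2.1]
        · exact if_neg (not_or.mpr ⟨h1, fun (h : v = s) => h2s e (h ▸ he)⟩)
      have htrue : ∀ v, (∃ e : E₁, Touches ends₁ e v) → κ v = true := by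
        intro v hv
        simp only [hκdef]
        exact if_pos (Or.inl hv)
      have hs : κ s = true := by
        simp only [hκdef]
        exact if_pos (Or.inr trivial)
      have ht : κ t = false := by
        simp only [hκdef]
        rw [if_neg (not_or.mpr ⟨fun ⟨e, he⟩ => h1t e he, hst.symm⟩), κ₂.2.2.1]
      have hcut : ∀ e ∈ {e : E₁ ⊕ E₂ | Sum.elim x₁ x₂ e = true},
          κ ((Sum.elim ends₁ ends₂) e).1 = κ ((Sum.elim ends₁ ends₂) e).2 := by
        rintro (e | e) he
        · show κ (ends₁ e).1 = κ (ends₁ e).2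
          rw [htrue _ ⟨e, Or.inl rfl⟩, htrue _ ⟨e, Or.inr rfl⟩]
        · show κ (ends₂ e).1 = κ (ends₂ e).2
          rw [hagree _ ⟨e, Or.inl rfl⟩, hagree _ ⟨e, Or.inr rfl⟩]
          exact κ₂.2.2.2 e he
      refine iInf_le_of_le ⟨κ, hs, ht, hcut⟩ ?_
      rw [card_filter_sum]
      simp only [Sum.elim_inl, Sum.elim_inr]
      erw [filter_card_congr ends₂ κ κ₂.1
            (fun e => ⟨hagree _ ⟨e, Or.inl rfl⟩, hagree _ ⟨e, Or.inr rfl⟩⟩),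
          filter_card_zero ends₁ κ
            (fun e => by rw [htrue _ ⟨e, Or.inl rfl⟩, htrue _ ⟨e, Or.inr rfl⟩]),
          Nat.zero_add]
    · -- ≥ : a cut of the glued graph restricts according to the value at m
      refine le_iInf fun κ => ?_
      rw [card_filter_sum]
      simp only [Sum.elim_inl, Sum.elim_inr]
      by_cases hm : κ.1 m = false
      · refine min_le_of_left_le ?_
        refine iInf_le_of_le ⟨κ.1, κ.2.1, hm, fun e he => κ.2.2.2 (Sum.inl e) he⟩ ?_
        exact Nat.cast_le.mpr (Nat.le_add_right _ _)
      · have hm' : κ.1 m = true := by simpa using hm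
        refine min_le_of_right_le ?_
        refine iInf_le_of_le ⟨κ.1, hm', κ.2.2.1, fun e he => κ.2.2.2 (Sum.inr e) he⟩ ?_
        exact Nat.cast_le.mpr (Nat.le_add_left _ _)
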